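/- For any probability measure μ⁰ on a finite state space S, uncertainty level ρ ≥ 0, and function V : S → [0, H] with min_s V(s) = 0, the distributionally robust expectation under the total-variation uncertainty set satisfies: inf over μ ∈ Δ(S) with D_TV(μ‖μ⁰) ≤ ρ of E_{s∼μ}[V(s)] equals max over α ∈ [0, H] of ( E_{s∼μ⁰}[min(V(s), α)] − ρα ). -/
import Mathlib


/-- Strong duality for TV uncertainty sets with a fail state (min V = 0):
the robust expectation equals the dual maximization over α ∈ [0,H]. -/
theorem tv_duality_fail_state {S : Type*} [Fintype S] [Nonempty S]
    (H ρ : ℝ) (hH : 0 < H) (hρ : 0 ≤ ρ)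
    (μ0 : S → ℝ) (hμ0 : ∀ s, 0 ≤ μ0 s) (hμ0sum : ∑ s, μ0 s = 1)
    (V : S → ℝ) (hV0 : ∀ s, 0 ≤ V s) (hVH : ∀ s, V s ≤ H)
    (hmin : ∃ s, V s = 0) :
    sInf {x : ℝ | ∃ μ : S → ℝ, (∀ s, 0 ≤ μ s) ∧ (∑ s, μ s = 1) ∧
        (1/2) * (∑ s, |μ s - μ0 s|) ≤ ρ ∧ x = ∑ s, μ s * V s}
      = sSup {y : ℝ | ∃ α : ℝ, 0 ≤ α ∧ α ≤ H ∧
        y = (∑ s, μ0 s * min (V s) α) - ρ * α} := by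
  classical
  obtain ⟨s0, hs0⟩ := hmin
  -- Weak duality
  have hweak : ∀ (μ : S → ℝ), (∀ s, 0 ≤ μ s) → (∑ s, μ s = 1) →
      (1/2) * (∑ s, |μ s - μ0 s|) ≤ ρ → ∀ a : ℝ, 0 ≤ a →
      (∑ s, μ0 s * min (V s) a) - ρ * a ≤ ∑ s, μ s * V s := by
    intro μ hμpos hμsum hμtv a ha
    have h1 : ∑ s, μ0 s * min (V s) a - ∑ s, μ s * min (V s) a ≤ ρ * a := by
      have hsum0 : ∑ s, (μ0 s - μ s) = 0 := by
        rw [Finset.sum_sub_distrib, hμ0sum, hμsum]; ring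
      have hrw : ∑ s, μ0 s * min (V s) a - ∑ s, μ s * min (V s) a
          = ∑ s, (μ0 s - μ s) * (min (V s) a - a/2) := by
        have e1 : ∑ s, (μ0 s - μ s) * (min (V s) a - a/2)
            = (∑ s, (μ0 s * min (V s) a - μ s * min (V s) a))
              - (a/2) * ∑ s, (μ0 s - μ s) := by
          rw [Finset.mul_sum, ← Finset.sum_sub_distrib]
          exact Finset.sum_congr rfl (fun s _ => by ring)
        rw [e1, hsum0, mul_zero, sub_zero, Finset.sum_sub_distrib]
      rw [hrw]
      calc ∑ s, (μ0 s - μ s) * (min (V s) a - a/2)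
          ≤ ∑ s, |μ s - μ0 s| * (a/2) := by
            apply Finset.sum_le_sum
            intro s _
            have h2 : |min (V s) a - a/2| ≤ a/2 := by
              rw [abs_le]
              constructor
              · have : 0 ≤ min (V s) a := le_min (hV0 s) ha
                linarith
              · have : min (V s) a ≤ a := min_le_right _ _
                linarith
            calc (μ0 s - μ s) * (min (V s) a - a/2)
                ≤ |(μ0 s - μ s) * (min (V s) a - a/2)| := le_abs_self _
              _ = |μ0 s - μ s| * |min (V s) a - a/2| := abs_mul _ _
              _ ≤ |μ0 s - μ s| * (a/2) := by
                  apply mul_le_mul_of_nonneg_left h2 (abs_nonneg _)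
              _ = |μ s - μ0 s| * (a/2) := by rw [abs_sub_comm]
        _ = (a/2) * ∑ s, |μ s - μ0 s| := by
            rw [Finset.mul_sum]
            exact Finset.sum_congr rfl (fun s _ => by ring)
        _ ≤ ρ * a := by nlinarith [Finset.sum_nonneg (fun s (_ : s ∈ Finset.univ) => abs_nonneg (μ s - μ0 s))]
    have h2 : ∑ s, μ s * min (V s) a ≤ ∑ s, μ s * V s := by
      apply Finset.sum_le_sum
      intro s _
      exact mul_le_mul_of_nonneg_left (min_le_left _ _) (hμpos s)
    linarith
  -- membership of μ0 in the primal set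
  have hμ0mem : (∑ s, μ0 s * V s) ∈ {x : ℝ | ∃ μ : S → ℝ, (∀ s, 0 ≤ μ s) ∧ (∑ s, μ s = 1) ∧
      (1/2) * (∑ s, |μ s - μ0 s|) ≤ ρ ∧ x = ∑ s, μ s * V s} := by
    refine ⟨μ0, hμ0, hμ0sum, ?_, rfl⟩
    have htv0 : (1/2) * (∑ s, |μ0 s - μ0 s|) = 0 := by simp
    exact le_of_eq_of_le htv0 hρ
  have hPne : Set.Nonempty {x : ℝ | ∃ μ : S → ℝ, (∀ s, 0 ≤ μ s) ∧ (∑ s, μ s = 1) ∧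
      (1/2) * (∑ s, |μ s - μ0 s|) ≤ ρ ∧ x = ∑ s, μ s * V s} := ⟨_, hμ0mem⟩
  have hDne : Set.Nonempty {y : ℝ | ∃ α : ℝ, 0 ≤ α ∧ α ≤ H ∧
      y = (∑ s, μ0 s * min (V s) α) - ρ * α} := by
    refine ⟨(∑ s, μ0 s * min (V s) 0) - ρ * 0, 0, le_refl 0, hH.le, rfl⟩
  have hPbdd : BddBelow {x : ℝ | ∃ μ : S → ℝ, (∀ s, 0 ≤ μ s) ∧ (∑ s, μ s = 1) ∧
      (1/2) * (∑ s, |μ s - μ0 s|) ≤ ρ ∧ x = ∑ s, μ s * V s} := by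
    refine ⟨0, ?_⟩
    rintro x ⟨μ, hμpos, _, _, rfl⟩
    exact Finset.sum_nonneg (fun s _ => mul_nonneg (hμpos s) (hV0 s))
  have hDbdd : BddAbove {y : ℝ | ∃ α : ℝ, 0 ≤ α ∧ α ≤ H ∧
      y = (∑ s, μ0 s * min (V s) α) - ρ * α} := by
    refine ⟨∑ s, μ0 s * V s, ?_⟩
    rintro y ⟨a, ha0, _, rfl⟩
    have htv0 : (1/2) * (∑ s, |μ0 s - μ0 s|) = 0 := by simp
    exact hweak μ0 hμ0 hμ0sum (le_of_eq_of_le htv0 hρ) a ha0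
  -- The threshold α*
  set A : Finset ℝ := insert 0 (Finset.univ.image V) with hA
  have hAne : A.Nonempty := ⟨0, Finset.mem_insert_self _ _⟩
  have hVA : ∀ s, V s ∈ A := fun s =>
    Finset.mem_insert_of_mem (Finset.mem_image_of_mem V (Finset.mem_univ s))
  set C : Finset ℝ :=
    A.filter (fun b => ∑ s ∈ Finset.univ.filter (fun s => b < V s), μ0 s ≤ ρ) with hC
  have hCne : C.Nonempty := by
    refine ⟨A.max' hAne, Finset.mem_filter.mpr ⟨A.max'_mem hAne, ?_⟩⟩
    have hfe : (Finset.univ.filter (fun s => A.max' hAne < V s)) = ∅ := by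
      apply Finset.filter_eq_empty_iff.mpr
      intro s _
      exact not_lt.mpr (A.le_max' _ (hVA s))
    rw [hfe]
    simpa using hρ
  set α : ℝ := C.min' hCne with hαdef
  have hαC : α ∈ C := C.min'_mem hCne
  have hαA : α ∈ A := (Finset.mem_filter.mp hαC).1
  have hp : ∑ s ∈ Finset.univ.filter (fun s => α < V s), μ0 s ≤ ρ :=
    (Finset.mem_filter.mp hαC).2
  have hAnonneg : ∀ b ∈ A, 0 ≤ b := by
    intro b hb
    rcases Finset.mem_insert.mp hb with h | h
    · exact h.symm ▸ le_refl 0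
    · obtain ⟨s, _, hs⟩ := Finset.mem_image.mp h
      exact hs ▸ hV0 s
  have hα0 : 0 ≤ α := hAnonneg α hαA
  have hαH : α ≤ H := by
    rcases Finset.mem_insert.mp hαA with h | h
    · exact h ▸ hH.le
    · obtain ⟨s, _, hs⟩ := Finset.mem_image.mp h
      exact hs ▸ hVH s
  set p : ℝ := ∑ s ∈ Finset.univ.filter (fun s => α < V s), μ0 s with hpdef
  set q : ℝ := ∑ s ∈ Finset.univ.filter (fun s => V s = α), μ0 s with hqdef
  have hpq : 0 < α → ρ < p + q := by
    intro hpos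
    set B : Finset ℝ := A.filter (fun b => b < α) with hB
    have hBne : B.Nonempty := ⟨0, Finset.mem_filter.mpr ⟨Finset.mem_insert_self _ _, hpos⟩⟩
    set β : ℝ := B.max' hBne with hβdef
    have hβB : β ∈ B := B.max'_mem hBne
    have hβA : β ∈ A := (Finset.mem_filter.mp hβB).1
    have hβα : β < α := (Finset.mem_filter.mp hβB).2
    have hβ : ρ < ∑ s ∈ Finset.univ.filter (fun s => β < V s), μ0 s := by
      by_contra h
      push_neg at h
      have : β ∈ C := Finset.mem_filter.mpr ⟨hβA, h⟩
      exact absurd (C.min'_le β this) (not_le.mpr hβα)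
    have hset : Finset.univ.filter (fun s => β < V s)
        = Finset.univ.filter (fun s => α ≤ V s) := by
      ext s
      simp only [Finset.mem_filter, Finset.mem_univ, true_and]
      constructor
      · intro h
        by_contra hlt
        push_neg at hlt
        have : V s ∈ B := Finset.mem_filter.mpr ⟨hVA s, hlt⟩
        exact absurd (B.le_max' _ this) (not_le.mpr h)
      · intro h
        exact lt_of_lt_of_le hβα h
    have hsplit : Finset.univ.filter (fun s => α ≤ V s)
        = Finset.univ.filter (fun s => α < V s) ∪ Finset.univ.filter (fun s => V s = α) := by
      ext s
      simp only [Finset.mem_union, Finset.mem_filter, Finset.mem_univ, true_and]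
      constructor
      · intro h
        rcases lt_or_eq_of_le h with h' | h'
        · exact Or.inl h'
        · exact Or.inr h'.symm
      · rintro (h | h)
        · exact h.le
        · exact h.ge
    have hdisj : Disjoint (Finset.univ.filter (fun s => α < V s))
        (Finset.univ.filter (fun s => V s = α)) := by
      rw [Finset.disjoint_left]
      intro s h1 h2
      have h1' : α < V s := (Finset.mem_filter.mp h1).2
      have h2' : V s = α := (Finset.mem_filter.mp h2).2
      exact absurd h2' (LT.lt.ne' h1')
    rw [hset, hsplit, Finset.sum_union hdisj] at hβ
    exact hβ
  -- t, c, m and the primal optimizer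
  set t : ℝ := if 0 < α then (ρ - p) / q else 0 with htdef
  have hq0 : 0 < α → 0 < q := by
    intro hpos
    have := hpq hpos
    linarith
  have ht0 : 0 ≤ t := by
    rw [htdef]
    split_ifs with h
    · exact div_nonneg (by linarith) (hq0 h).le
    · exact le_refl 0
  have ht1 : t ≤ 1 := by
    rw [htdef]
    split_ifs with h
    · rw [div_le_one (hq0 h)]
      have := hpq h
      linarith
    · exact zero_le_one
  have htq : 0 < α → t * q = ρ - p := by
    intro h
    rw [htdef, if_pos h]
    exact div_mul_cancel₀ _ (hq0 h).ne'
  set c : S → ℝ := fun s => if α < V s then 0 else if V s = α then 1 - t else 1 with hcdef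
  have hc0 : ∀ s, 0 ≤ c s := by
    intro s
    rw [hcdef]
    dsimp only
    split_ifs with h1 h2
    · exact le_refl 0
    · linarith
    · exact zero_le_one
  have hc1 : ∀ s, c s ≤ 1 := by
    intro s
    rw [hcdef]
    dsimp only
    split_ifs with h1 h2
    · exact zero_le_one
    · linarith
    · exact le_refl 1
  have hcs0 : c s0 = 1 := by
    rw [hcdef]
    dsimp only
    rw [hs0]
    split_ifs with h1 h2
    · exact absurd h1 (not_lt.mpr hα0)
    · have hno : ¬ (0 < α) := by rw [← h2]; exact lt_irrefl 0
      rw [htdef, if_neg hno]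
      ring
    · rfl
  set m : ℝ := ∑ s, (1 - c s) * μ0 s with hmdef
  have hm0 : 0 ≤ m :=
    Finset.sum_nonneg (fun s _ => mul_nonneg (by linarith [hc1 s]) (hμ0 s))
  have hmpq : m = p + t * q := by
    rw [hmdef]
    have hpt : ∀ s, (1 - c s) * μ0 s =
        (if α < V s then μ0 s else 0) + (if V s = α then t * μ0 s else 0) := by
      intro s
      rw [hcdef]
      dsimp only
      split_ifs with h1 h2
      · exact absurd h2 (LT.lt.ne' h1)
      · ring
      · ring
      · ring
    rw [Finset.sum_congr rfl (fun s _ => hpt s), Finset.sum_add_distrib]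
    rw [← Finset.sum_filter, ← Finset.sum_filter, ← Finset.mul_sum]
  have hmρ : m ≤ ρ := by
    by_cases h : 0 < α
    · rw [hmpq, htq h]; linarith
    · have : t = 0 := by rw [htdef, if_neg h]
      rw [hmpq, this, zero_mul, add_zero]
      exact hp
  have hαm : α * m = α * ρ := by
    by_cases h : 0 < α
    · rw [hmpq, htq h]; ring
    · have : α = 0 := le_antisymm (not_lt.mp h) hα0
      rw [this, zero_mul, zero_mul]
  set μ1 : S → ℝ := fun s => c s * μ0 s + (if s = s0 then m else 0) with hμ1def
  have hμ1pos : ∀ s, 0 ≤ μ1 s := by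
    intro s
    rw [hμ1def]
    dsimp only
    have h1 : 0 ≤ c s * μ0 s := mul_nonneg (hc0 s) (hμ0 s)
    split_ifs with h
    · linarith
    · linarith
  have hμ1sum : ∑ s, μ1 s = 1 := by
    rw [hμ1def]
    dsimp only
    rw [Finset.sum_add_distrib, Finset.sum_ite_eq' Finset.univ s0 (fun _ => m)]
    rw [if_pos (Finset.mem_univ s0)]
    have : ∑ s, c s * μ0 s + m = ∑ s, (c s * μ0 s + (1 - c s) * μ0 s) := by
      rw [Finset.sum_add_distrib, hmdef]
    rw [this]
    rw [Finset.sum_congr rfl (fun s _ => by ring : ∀ s ∈ Finset.univ, c s * μ0 s + (1 - c s) * μ0 s = μ0 s)]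
    exact hμ0sum
  have hμ1tv : (1/2) * (∑ s, |μ1 s - μ0 s|) ≤ ρ := by
    have hpt : ∀ s, |μ1 s - μ0 s| = (1 - c s) * μ0 s + (if s = s0 then m else 0) := by
      intro s
      rw [hμ1def]
      dsimp only
      by_cases h : s = s0
      · rw [if_pos h, h, hcs0]
        have e : (1:ℝ) * μ0 s0 + m - μ0 s0 = m := by ring
        rw [e, abs_of_nonneg hm0]
        ring
      · rw [if_neg h, add_zero, add_zero]
        have : c s * μ0 s - μ0 s = -((1 - c s) * μ0 s) := by ring
        rw [this, abs_neg, abs_of_nonneg (mul_nonneg (by linarith [hc1 s]) (hμ0 s))]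
    rw [Finset.sum_congr rfl (fun s _ => hpt s), Finset.sum_add_distrib]
    rw [Finset.sum_ite_eq' Finset.univ s0 (fun _ => m), if_pos (Finset.mem_univ s0)]
    rw [← hmdef]
    linarith
  have hμ1val : ∑ s, μ1 s * V s = (∑ s, μ0 s * min (V s) α) - ρ * α := by
    have hpt : ∀ s, μ0 s * min (V s) α = c s * μ0 s * V s + α * ((1 - c s) * μ0 s) := by
      intro s
      rw [hcdef]
      dsimp only
      split_ifs with h1 h2
      · rw [min_eq_right h1.le]; ring
      · rw [h2, min_self]; ring
      · push_neg at h1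
        rw [min_eq_left h1]; ring
    have hsum1 : ∑ s, μ0 s * min (V s) α = (∑ s, c s * μ0 s * V s) + α * m := by
      rw [Finset.sum_congr rfl (fun s _ => hpt s), Finset.sum_add_distrib, hmdef,
        Finset.mul_sum]
    have hsum2 : ∑ s, μ1 s * V s = ∑ s, c s * μ0 s * V s := by
      rw [hμ1def]
      dsimp only
      have : ∀ s, (c s * μ0 s + (if s = s0 then m else 0)) * V s
          = c s * μ0 s * V s + (if s = s0 then m * V s else 0) := by
        intro s
        split_ifs with h
        · ring
        · ring
      rw [Finset.sum_congr rfl (fun s _ => this s), Finset.sum_add_distrib]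
      rw [Finset.sum_ite_eq' Finset.univ s0 (fun x => m * V x), if_pos (Finset.mem_univ s0)]
      rw [hs0, mul_zero, add_zero]
    rw [hsum2]
    rw [hsum1]
    have : α * m = ρ * α := by rw [hαm]; ring
    linarith
  -- conclude
  apply le_antisymm
  · have hmemP : (∑ s, μ0 s * min (V s) α) - ρ * α ∈
        {x : ℝ | ∃ μ : S → ℝ, (∀ s, 0 ≤ μ s) ∧ (∑ s, μ s = 1) ∧
          (1/2) * (∑ s, |μ s - μ0 s|) ≤ ρ ∧ x = ∑ s, μ s * V s} :=
      ⟨μ1, hμ1pos, hμ1sum, hμ1tv, hμ1val.symm⟩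
    have hmemD : (∑ s, μ0 s * min (V s) α) - ρ * α ∈
        {y : ℝ | ∃ α : ℝ, 0 ≤ α ∧ α ≤ H ∧
          y = (∑ s, μ0 s * min (V s) α) - ρ * α} := ⟨α, hα0, hαH, rfl⟩
    exact le_trans (csInf_le hPbdd hmemP) (le_csSup hDbdd hmemD)
  · apply le_csInf hPne
    rintro x ⟨μ, h1, h2, h3, rfl⟩
    apply csSup_le hDne
    rintro y ⟨a, ha0, _, rfl⟩
    exact hweak μ h1 h2 h3 a ha0
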